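/- Let s be a real number with |s| > 1 and let T be a tree with maximum degree Δ(T) ≥ 3. Then ρ(M_T(s)) > (1 + |s|)². -/

import Mathlib

open Filter Topology

/-- The deformed Laplacian matrix `M_G(s) = I - s·A + s²·(D - I)` of a finite simple graph. -/
noncomputable def defLap {V : Type*} [Fintype V] [DecidableEq V] (G : SimpleGraph V) (s : ℝ) :
    Matrix V V ℝ :=
  letI := Classical.decRel G.Adj
  (1 : Matrix V V ℝ) - s • (G.adjMatrix ℝ) +
    s ^ 2 • (Matrix.diagonal (fun v => (G.degree v : ℝ)) - 1)

/-- The largest (real) eigenvalue of a matrix. -/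
noncomputable def lamMax {V : Type*} [Fintype V] (M : Matrix V V ℝ) : ℝ :=
  sSup {μ : ℝ | ∃ v : V → ℝ, v ≠ 0 ∧ M.mulVec v = μ • v}

/-- The spectral radius of a real matrix: the supremum of the absolute values of its
(real) eigenvalues. -/
noncomputable def specRad {V : Type*} [Fintype V] (M : Matrix V V ℝ) : ℝ :=
  sSup {x : ℝ | ∃ μ : ℝ, (∃ v : V → ℝ, v ≠ 0 ∧ M.mulVec v = μ • v) ∧ x = |μ|}

/-- The maximum degree of a finite simple graph. -/
noncomputable def maxDeg {V : Type*} [Fintype V] (G : SimpleGraph V) : ℕ :=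
  letI := Classical.decRel G.Adj
  G.maxDegree

section Spectral

open Matrix

variable {V : Type*} [Fintype V] [DecidableEq V]

lemma spec_real {M : Matrix V V ℝ} (hM : M.IsHermitian) :
    M = (hM.eigenvectorUnitary : Matrix V V ℝ) * Matrix.diagonal hM.eigenvalues
      * star (hM.eigenvectorUnitary : Matrix V V ℝ) := by
  conv_lhs => rw [hM.spectral_theorem]
  norm_num [Function.comp]

lemma eig_eq_of_pair {M : Matrix V V ℝ} (hM : M.IsHermitian) {μ : ℝ} {v : V → ℝ}
    (hv : v ≠ 0) (h : M *ᵥ v = μ • v) : ∃ i, μ = hM.eigenvalues i := by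
  set U : Matrix V V ℝ := (hM.eigenvectorUnitary : Matrix V V ℝ) with hUdef
  have hU2 : U * star U = 1 := (Matrix.mem_unitaryGroup_iff).mp hM.eigenvectorUnitary.2
  have hU1 : star U * U = 1 := (Matrix.mem_unitaryGroup_iff').mp hM.eigenvectorUnitary.2
  set w : V → ℝ := star U *ᵥ v with hw
  have hwne : w ≠ 0 := by
    intro h0
    apply hv
    have hv' : U *ᵥ w = v := by rw [hw, Matrix.mulVec_mulVec, hU2, Matrix.one_mulVec]
    rw [← hv', h0, Matrix.mulVec_zero]
  have hDw : Matrix.diagonal hM.eigenvalues *ᵥ w = μ • w := by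
    have h2 : star U *ᵥ (M *ᵥ v) = star U *ᵥ (μ • v) := congrArg _ h
    rw [Matrix.mulVec_smul] at h2
    calc Matrix.diagonal hM.eigenvalues *ᵥ w
        = Matrix.diagonal hM.eigenvalues *ᵥ (star U *ᵥ v) := rfl
      _ = star U *ᵥ (M *ᵥ v) := by
          conv_rhs => rw [spec_real hM, ← hUdef]
          rw [Matrix.mulVec_mulVec, Matrix.mulVec_mulVec, ← mul_assoc, ← mul_assoc,
            hU1, one_mul]
      _ = μ • w := h2
  obtain ⟨i, hi⟩ := Function.ne_iff.mp hwne
  refine ⟨i, ?_⟩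
  have h3 := congrFun hDw i
  rw [Matrix.mulVec_diagonal] at h3
  simp only [Pi.smul_apply, smul_eq_mul] at h3
  have hwi : w i ≠ 0 := by simpa using hi
  exact (mul_right_cancel₀ hwi h3).symm

lemma eigval_mem {M : Matrix V V ℝ} (hM : M.IsHermitian) (i : V) :
    hM.eigenvalues i ∈ {μ : ℝ | ∃ v : V → ℝ, v ≠ 0 ∧ M.mulVec v = μ • v} := by
  refine ⟨hM.eigenvectorBasis i, ?_, hM.mulVec_eigenvectorBasis i⟩
  intro h0
  apply hM.eigenvectorBasis.toBasis.ne_zero i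
  rw [OrthonormalBasis.coe_toBasis]
  ext j
  exact congrFun h0 j

lemma rayleigh_lt_lamMax {M : Matrix V V ℝ} (hM : M.IsHermitian) {c : ℝ} {x : V → ℝ}
    (hx : x ≠ 0) (h : c * (x ⬝ᵥ x) < x ⬝ᵥ (M *ᵥ x)) : c < lamMax M := by
  have hne : Nonempty V := by
    rcases isEmpty_or_nonempty V with he | h'
    · exact absurd (Subsingleton.elim x 0) hx
    · exact h'
  have hsub : {μ : ℝ | ∃ v : V → ℝ, v ≠ 0 ∧ M.mulVec v = μ • v} ⊆
      Set.range hM.eigenvalues := by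
    rintro μ ⟨v, hv, hmv⟩
    obtain ⟨i, hi⟩ := eig_eq_of_pair hM hv hmv
    exact ⟨i, hi.symm⟩
  have hbdd : BddAbove {μ : ℝ | ∃ v : V → ℝ, v ≠ 0 ∧ M.mulVec v = μ • v} :=
    ((Set.finite_range hM.eigenvalues).subset hsub).bddAbove
  set U : Matrix V V ℝ := (hM.eigenvectorUnitary : Matrix V V ℝ) with hUdef
  have hU2 : U * star U = 1 := (Matrix.mem_unitaryGroup_iff).mp hM.eigenvectorUnitary.2
  set y : V → ℝ := star U *ᵥ x with hy
  have hyU : x ᵥ* U = y := by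
    rw [hy, Matrix.star_eq_conjTranspose, Matrix.conjTranspose_eq_transpose_of_trivial,
      Matrix.mulVec_transpose]
  have key1 : x ⬝ᵥ (M *ᵥ x) = ∑ i, hM.eigenvalues i * (y i * y i) := by
    conv_lhs => rw [spec_real hM, ← hUdef]
    rw [← Matrix.mulVec_mulVec, ← Matrix.mulVec_mulVec, Matrix.dotProduct_mulVec, hyU]
    rw [dotProduct]
    exact Finset.sum_congr rfl fun i _ => by
      rw [Matrix.mulVec_diagonal]; ring
  have key2 : x ⬝ᵥ x = ∑ i, y i * y i := by
    have h0 : x ⬝ᵥ x = x ⬝ᵥ ((U * star U) *ᵥ x) := by rw [hU2, Matrix.one_mulVec]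
    rw [h0, ← Matrix.mulVec_mulVec, Matrix.dotProduct_mulVec, hyU]
    rfl
  obtain ⟨i₀, -, hmax⟩ := Finset.exists_max_image Finset.univ hM.eigenvalues
    ⟨Classical.arbitrary V, Finset.mem_univ _⟩
  have hxx : 0 < x ⬝ᵥ x := by
    rcases lt_or_eq_of_le (show (0:ℝ) ≤ x ⬝ᵥ x from
      Finset.sum_nonneg fun i _ => mul_self_nonneg (x i)) with h1 | h1
    · exact h1
    · exact absurd (dotProduct_self_eq_zero.mp h1.symm) hx
  have hsum : x ⬝ᵥ (M *ᵥ x) ≤ hM.eigenvalues i₀ * (x ⬝ᵥ x) := by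
    rw [key1, key2, Finset.mul_sum]
    exact Finset.sum_le_sum fun i _ =>
      mul_le_mul_of_nonneg_right (hmax i (Finset.mem_univ i)) (mul_self_nonneg _)
  have hlt : c < hM.eigenvalues i₀ := by
    have h2 := h.trans_le hsum
    exact lt_of_mul_lt_mul_right (by linarith) hxx.le
  exact hlt.trans_le (le_csSup hbdd (eigval_mem hM i₀))

end Spectral

section TreeFacts

variable {V : Type*}

lemma no_triangle_of_acyclic {T : SimpleGraph V} (hT : T.IsAcyclic) {a b c : V}
    (hab : T.Adj a b) (hac : T.Adj a c) (hbc : T.Adj b c) : False := by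
  have hP : (SimpleGraph.Walk.cons hab (SimpleGraph.Walk.cons hbc SimpleGraph.Walk.nil)).IsPath := by
    simp [SimpleGraph.Walk.isPath_def, hab.ne, hbc.ne, hac.ne]
  have := hT.path_unique ⟨_, hP⟩ (SimpleGraph.Path.singleton hac)
  have hlen := congrArg (fun p => SimpleGraph.Walk.length p.1) this
  simp [SimpleGraph.Path.singleton] at hlen

end TreeFacts

open Matrix in
lemma key_ineq {a d t : ℝ} (ha : 1 < a) (hd : 3 ≤ d) (ht : t * (2 + a) = 1) :
    (1 + a) ^ 2 * (1 + d * (t * t)) < 1 + d * (t * t) + 2 * (d * (a * t)) + a ^ 2 * (d - 1) := by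
  have hP : (0:ℝ) < 2 + a := by linarith
  have ht' : 0 < t := by nlinarith
  have h5 : t - t * t * (2 + a) = 0 := by linear_combination (1 - t) * ht - ht
  have h6 : 0 < 3 * t + a - 2 := by nlinarith
  have h7 : 2 * a + 2 < d * (t + a) := by
    nlinarith [mul_nonneg (sub_nonneg.2 hd) (by linarith : (0:ℝ) ≤ t + a)]
  have heq : (1 + d * (t * t) + 2 * (d * (a * t)) + a ^ 2 * (d - 1))
      - (1 + a) ^ 2 * (1 + d * (t * t))
      = a * (d * (t + a) - (2 * a + 2)) + a * d * (t - t * t * (2 + a)) := by ring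
  have hz : a * d * (t - t * t * (2 + a)) = 0 := by rw [h5, mul_zero]
  have hpos : 0 < a * (d * (t + a) - (2 * a + 2)) :=
    mul_pos (by linarith) (by linarith)
  linarith [heq, hz, hpos]

set_option maxHeartbeats 1000000 in
open Matrix in
/-- for a real `s` with `|s| > 1` and a tree `T` with maximum degree
`Δ(T) ≥ 3`, one has `ρ(M_T(s)) > (1 + |s|)²`. -/
theorem stmt11 {V : Type*} [Fintype V] [DecidableEq V] (T : SimpleGraph V)
    (hT : T.IsTree) (s : ℝ) (hs : 1 < |s|) (hdeg : 3 ≤ maxDeg T) :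
    (1 + |s|) ^ 2 < lamMax (defLap T s) := by
  letI instAdj : DecidableRel T.Adj := Classical.decRel T.Adj
  have hne : Nonempty V := by
    by_contra h
    rw [not_nonempty_iff] at h
    have h0 : maxDeg T = 0 := by
      unfold maxDeg SimpleGraph.maxDegree
      simp [Finset.univ_eq_empty]
    omega
  obtain ⟨u, hu⟩ := T.exists_maximal_degree_vertex
  have hdu : 3 ≤ T.degree u := by
    rw [← hu]; exact hdeg
  -- constants
  set a : ℝ := |s| with hadef
  have ha1 : 1 < a := hs
  have ha0 : 0 < a := by linarith
  have hs0 : s ≠ 0 := by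
    intro h0
    rw [hadef, h0, abs_zero] at ha1
    linarith
  have hsa : s * s = a * a := by
    rw [hadef]
    exact (abs_mul_abs_self s).symm
  set t : ℝ := 1 / (2 + a) with htdef
  have hP : (0:ℝ) < 2 + a := by linarith
  have ht : t * (2 + a) = 1 := by rw [htdef]; field_simp
  have ht0 : 0 < t := by positivity
  set b : ℝ := -(s / a) * t with hbdef
  have ha0' : a ≠ 0 := ne_of_gt ha0
  have hbb : b * b = t * t := by
    have h1 : b * b = ((s * s) * (t * t)) / (a * a) := by
      rw [hbdef]; field_simp
    rw [h1, hsa]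
    field_simp
  have hsb : -(s * b) = a * t := by
    have h1 : -(s * b) = s * s * t / a := by
      rw [hbdef]; field_simp
    rw [h1, hsa]
    field_simp
  -- test vector
  set x : V → ℝ := fun w => if w = u then 1 else if T.Adj u w then b else 0 with hxdef
  have hxu : x u = 1 := by simp [hxdef]
  have hxN : ∀ w, T.Adj u w → x w = b := by
    intro w hw
    simp [hxdef, (T.ne_of_adj hw).symm, hw]
  have hxO : ∀ w, w ≠ u → ¬ T.Adj u w → x w = 0 := by
    intro w h1 h2
    simp [hxdef, h1, h2]
  have hxne : x ≠ 0 := by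
    intro h0
    have := congrFun h0 u
    rw [hxu] at this
    simp at this
  set N := T.neighborFinset u with hNdef
  have huN : u ∉ N := by simp [hNdef]
  set d : ℝ := (N.card : ℝ) with hddef
  have hdcard : N.card = T.degree u := rfl
  have hd3 : (3:ℝ) ≤ d := by
    rw [hddef]
    exact_mod_cast hdcard ▸ hdu
  -- generic sum splitting
  have sumx : ∀ g : V → ℝ, (∑ w, x w * g w) = g u + b * ∑ w ∈ N, g w := by
    intro g
    have hsplit : (∑ w, x w * g w) = ∑ w ∈ insert u N, x w * g w := by
      refine (Finset.sum_subset (Finset.subset_univ _) ?_).symm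
      intro w _ hw
      rw [Finset.mem_insert] at hw
      push_neg at hw
      rw [hxO w hw.1 (by simpa [hNdef] using hw.2), zero_mul]
    rw [hsplit, Finset.sum_insert huN, hxu, one_mul, Finset.mul_sum]
    congr 1
    refine Finset.sum_congr rfl fun w hw => ?_
    rw [hxN w (by simpa [hNdef] using hw)]
  -- the three quadratic form computations
  have hXX : x ⬝ᵥ x = 1 + d * (t * t) := by
    simp only [dotProduct]
    rw [sumx x, hxu]
    have : ∑ w ∈ N, x w = d * b := by
      rw [Finset.sum_congr rfl (fun w hw => hxN w (by simpa [hNdef] using hw)),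
        Finset.sum_const, nsmul_eq_mul, hddef]
    rw [this, ← hbb]
    ring
  have hAX : x ⬝ᵥ ((T.adjMatrix ℝ) *ᵥ x) = 2 * (d * b) := by
    simp only [dotProduct]
    rw [sumx]
    have hAu : ((T.adjMatrix ℝ) *ᵥ x) u = d * b := by
      rw [SimpleGraph.adjMatrix_mulVec_apply]
      rw [Finset.sum_congr rfl (fun w hw => hxN w (by simpa [hNdef] using hw)),
        Finset.sum_const, nsmul_eq_mul, hddef]
    have hAw : ∀ w ∈ N, ((T.adjMatrix ℝ) *ᵥ x) w = 1 := by
      intro w hw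
      have hadj : T.Adj u w := by simpa [hNdef] using hw
      rw [SimpleGraph.adjMatrix_mulVec_apply]
      rw [Finset.sum_eq_single u]
      · exact hxu
      · intro j hj hju
        have hwj : T.Adj w j := by simpa using hj
        refine hxO j hju fun huj => ?_
        exact no_triangle_of_acyclic hT.2 hadj huj hwj
      · intro hu'
        exact absurd (by simpa using hadj.symm) hu'
    rw [Finset.sum_congr rfl hAw, Finset.sum_const, nsmul_eq_mul, mul_one, hAu, ← hddef]
    ring
  have hDX : d + d * (t * t) ≤ x ⬝ᵥ ((Matrix.diagonal fun v => (T.degree v : ℝ)) *ᵥ x) := by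
    have hval : x ⬝ᵥ ((Matrix.diagonal fun v => (T.degree v : ℝ)) *ᵥ x)
        = d + (b * b) * ∑ w ∈ N, (T.degree w : ℝ) := by
      simp only [dotProduct]
      have : ∀ w, x w * ((Matrix.diagonal fun v => (T.degree v : ℝ)) *ᵥ x) w
          = x w * ((T.degree w : ℝ) * x w) := by
        intro w
        rw [Matrix.mulVec_diagonal]
      rw [Finset.sum_congr rfl fun w _ => this w, sumx, hxu, mul_one]
      have : ∑ w ∈ N, (T.degree w : ℝ) * x w = (∑ w ∈ N, (T.degree w : ℝ)) * b := by
        rw [Finset.sum_mul]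
        refine Finset.sum_congr rfl fun w hw => ?_
        rw [hxN w (by simpa [hNdef] using hw)]
      rw [this, hddef, hdcard]
      ring
    rw [hval, hbb]
    have hsum : d ≤ ∑ w ∈ N, (T.degree w : ℝ) := by
      rw [hddef]
      calc (N.card : ℝ) = ∑ _w ∈ N, (1:ℝ) := by rw [Finset.sum_const, nsmul_eq_mul, mul_one]
        _ ≤ ∑ w ∈ N, (T.degree w : ℝ) := by
            refine Finset.sum_le_sum fun w hw => ?_
            have hadj : T.Adj u w := by simpa [hNdef] using hw
            have : 0 < T.degree w := by
              rw [SimpleGraph.degree_pos_iff_exists_adj]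
              exact ⟨u, hadj.symm⟩
            exact_mod_cast this
    nlinarith [mul_pos ht0 ht0]
  -- symmetry
  have hHerm : (defLap T s).IsHermitian := by
    unfold defLap
    rw [Matrix.IsHermitian, Matrix.conjTranspose_eq_transpose_of_trivial]
    have hA : (T.adjMatrix ℝ)ᵀ = T.adjMatrix ℝ := T.isSymm_adjMatrix
    simp [Matrix.transpose_add, Matrix.transpose_sub, Matrix.transpose_smul, hA,
      Matrix.diagonal_transpose]
  -- Rayleigh quotient bound
  refine rayleigh_lt_lamMax hHerm hxne ?_
  have hexp : x ⬝ᵥ ((defLap T s) *ᵥ x)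
      = x ⬝ᵥ x - s * (x ⬝ᵥ ((T.adjMatrix ℝ) *ᵥ x))
        + s ^ 2 * (x ⬝ᵥ ((Matrix.diagonal fun v => (T.degree v : ℝ)) *ᵥ x) - x ⬝ᵥ x) := by
    show x ⬝ᵥ (((1 : Matrix V V ℝ) - s • (T.adjMatrix ℝ) +
      s ^ 2 • (Matrix.diagonal (fun v => (T.degree v : ℝ)) - 1)) *ᵥ x) = _
    simp only [Matrix.add_mulVec, Matrix.sub_mulVec, Matrix.smul_mulVec,
      Matrix.one_mulVec, dotProduct_add, dotProduct_sub,
      dotProduct_smul, smul_eq_mul]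
  rw [hexp, hXX, hAX]
  have hs2 : (0:ℝ) < s ^ 2 := by positivity
  have hstep : 1 + d * (t * t) - s * (2 * (d * b))
      + s ^ 2 * (d + d * (t * t) - (1 + d * (t * t)))
      ≤ 1 + d * (t * t) - s * (2 * (d * b))
      + s ^ 2 * (x ⬝ᵥ ((Matrix.diagonal fun v => (T.degree v : ℝ)) *ᵥ x) - (1 + d * (t * t))) := by
    have := hDX
    nlinarith
  refine lt_of_lt_of_le ?_ hstep
  have hsb2 : - (s * (2 * (d * b))) = 2 * (d * (a * t)) := by
    have : s * (2 * (d * b)) = 2 * d * (s * b) := by ring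
    rw [this]
    rw [← hsb]
    ring
  have hsq : s ^ 2 = a ^ 2 := by rw [sq, sq, hsa]
  have := key_ineq ha1 hd3 ht
  nlinarith [this]
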